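/- Let (X,‖·‖) be a separable real Banach space and let φ: P_X → P_X be a surjective π-isometry with φ(δ_x) = δ_x for all x ∈ X. Let μ ∈ F_X \ Δ_X, let K be the convex hull of S_μ and let x̂ be a vertex of K. Then S_{φ(μ)} ⊆ K, and x̂ is an isolated atom of φ(μ) with (φ(μ))({x̂}) = μ({x̂}) (i.e., there is r > 0 with (φ(μ))(closure(B_{r'}(x̂))) = (φ(μ))({x̂}) = μ({x̂}) for some r' > 0). -/

import Mathlib

open MeasureTheory Metric Set TopologicalSpace

/-- The (one-sided) Lévy–Prokhorov distance of two Borel probability measures. -/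
noncomputable def LPdist {X : Type*} [MetricSpace X] [MeasurableSpace X]
    (μ ν : ProbabilityMeasure X) : ℝ :=
  sInf {ε : ℝ | 0 < ε ∧ ∀ A : Set X, MeasurableSet A →
    (μ : Measure X) A ≤ (ν : Measure X) (thickening ε A) + ENNReal.ofReal ε}

/-- The s-Lévy–Prokhorov distance. -/
noncomputable def LPsdist {X : Type*} [MetricSpace X] [MeasurableSpace X]
    (s : ℝ) (μ ν : ProbabilityMeasure X) : ℝ :=
  sInf {ε : ℝ | 0 < ε ∧ ∀ A : Set X, MeasurableSet A →
    ENNReal.ofReal s * (μ : Measure X) A ≤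
      ENNReal.ofReal s * (ν : Measure X) (thickening ε A) + ENNReal.ofReal ε}

/-- The support of a Borel probability measure. -/
def mSupport {X : Type*} [MetricSpace X] [MeasurableSpace X]
    (μ : ProbabilityMeasure X) : Set X :=
  {x : X | ∀ r : ℝ, 0 < r → 0 < (μ : Measure X) (ball x r)}

/-- The Dirac measure as a probability measure. -/
noncomputable def diracPM {X : Type*} [MeasurableSpace X] (x : X) : ProbabilityMeasure X :=
  ⟨Measure.dirac x, inferInstance⟩

/-- Finitely supported probability measures: finite convex combinations of Dirac measures. -/
def IsFinitelySupported {X : Type*} [MeasurableSpace X] (μ : ProbabilityMeasure X) : Prop :=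
  ∃ (s : Finset X) (w : X → ℝ), (∀ x ∈ s, 0 < w x) ∧ (∑ x ∈ s, w x = 1) ∧
    (μ : Measure X) = ∑ x ∈ s, ENNReal.ofReal (w x) • Measure.dirac x

/-- The unit distance set of a set of probability measures. -/
def unitDistSet {X : Type*} [MetricSpace X] [MeasurableSpace X]
    (𝒜 : Set (ProbabilityMeasure X)) : Set (ProbabilityMeasure X) :=
  {ν | ∀ μ ∈ 𝒜, LPdist μ ν = 1}

/-- The witness function. -/
noncomputable def witness {X : Type*} [MetricSpace X] [MeasurableSpace X]
    (μ : ProbabilityMeasure X) (x : X) : ℝ :=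
  LPdist (diracPM x) μ

/-- The s-witness function. -/
noncomputable def switness {X : Type*} [MetricSpace X] [MeasurableSpace X]
    (s : ℝ) (μ : ProbabilityMeasure X) (x : X) : ℝ :=
  LPsdist s (diracPM x) μ

open scoped ENNReal
set_option linter.unusedSectionVars false
set_option linter.unusedVariables false

section WitnessAux
variable {X : Type*} [MetricSpace X] [MeasurableSpace X] [BorelSpace X]

lemma coe_diracPM (x : X) : (diracPM x : Measure X) = Measure.dirac x := rfl

lemma two_mem_wset (ρ : ProbabilityMeasure X) (x : X) :
    (2:ℝ) ∈ {ε : ℝ | 0 < ε ∧ ∀ A : Set X, MeasurableSet A →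
      (diracPM x : Measure X) A ≤ (ρ : Measure X) (thickening ε A) + ENNReal.ofReal ε} := by
  refine ⟨by norm_num, fun A hA => ?_⟩
  calc (diracPM x : Measure X) A ≤ 1 := prob_le_one
    _ ≤ ENNReal.ofReal 2 := by
        rw [show (1:ℝ≥0∞) = ENNReal.ofReal 1 by simp]
        exact ENNReal.ofReal_le_ofReal (by norm_num)
    _ ≤ _ := le_add_self

lemma wset_bddBelow (ρ : ProbabilityMeasure X) (x : X) :
    BddBelow {ε : ℝ | 0 < ε ∧ ∀ A : Set X, MeasurableSet A →
      (diracPM x : Measure X) A ≤ (ρ : Measure X) (thickening ε A) + ENNReal.ofReal ε} :=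
  ⟨0, fun y hy => le_of_lt hy.1⟩

/-- Upper bound for the witness from the ball inequality. -/
lemma witness_le (ρ : ProbabilityMeasure X) (x : X) {ε : ℝ} (hε : 0 < ε)
    (h : 1 ≤ (ρ : Measure X) (ball x ε) + ENNReal.ofReal ε) : witness ρ x ≤ ε := by
  apply csInf_le (wset_bddBelow ρ x)
  refine ⟨hε, fun A hA => ?_⟩
  by_cases hx : x ∈ A
  · calc (diracPM x : Measure X) A ≤ 1 := prob_le_one
      _ ≤ (ρ : Measure X) (ball x ε) + ENNReal.ofReal ε := h
      _ ≤ (ρ : Measure X) (thickening ε A) + ENNReal.ofReal ε := by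
          gcongr
          rw [← thickening_singleton]
          exact thickening_subset_of_subset ε (singleton_subset_iff.2 hx)
  · rw [coe_diracPM, Measure.dirac_apply' x hA, Set.indicator_of_notMem hx]
    exact zero_le

/-- Lower bound for the witness from failure of the ball inequality. -/
lemma le_witness (ρ : ProbabilityMeasure X) (x : X) {E : ℝ}
    (h : ∀ ε : ℝ, 0 < ε → ε < E →
      ¬ (1 ≤ (ρ : Measure X) (ball x ε) + ENNReal.ofReal ε)) : E ≤ witness ρ x := by
  apply le_csInf ⟨2, two_mem_wset ρ x⟩
  rintro b ⟨hb0, hb⟩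
  by_contra hbe
  push_neg at hbe
  refine h b hb0 hbe ?_
  have := hb {x} (measurableSet_singleton x)
  rwa [coe_diracPM, Measure.dirac_apply_of_mem (mem_singleton x), thickening_singleton] at this

/-- Above the witness value, the ball inequality holds. -/
lemma witness_ball (ρ : ProbabilityMeasure X) (x : X) {ε : ℝ} (h : witness ρ x < ε) :
    1 ≤ (ρ : Measure X) (ball x ε) + ENNReal.ofReal ε := by
  obtain ⟨ε', hε'mem, hε'⟩ := exists_lt_of_csInf_lt ⟨2, two_mem_wset ρ x⟩ h
  obtain ⟨hε'0, hε'A⟩ := hε'mem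
  have := hε'A {x} (measurableSet_singleton x)
  rw [coe_diracPM, Measure.dirac_apply_of_mem (mem_singleton x), thickening_singleton] at this
  calc (1:ℝ≥0∞) ≤ (ρ : Measure X) (ball x ε') + ENNReal.ofReal ε' := this
    _ ≤ (ρ : Measure X) (ball x ε) + ENNReal.ofReal ε := by
        have hsub : ball x ε' ⊆ ball x ε := ball_subset_ball hε'.le
        gcongr

end WitnessAux

section GeomAux
variable {X : Type*} [NormedAddCommGroup X] [NormedSpace ℝ X] [MeasurableSpace X] [BorelSpace X]

lemma fs_apply (s : Finset X) (wf : X → ℝ) (A : Set X) (hA : MeasurableSet A) :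
    (∑ p ∈ s, ENNReal.ofReal (wf p) • Measure.dirac p) A
      = ∑ p ∈ s, Set.indicator A (fun _ => ENNReal.ofReal (wf p)) p := by
  rw [Measure.finset_sum_apply]
  refine Finset.sum_congr rfl fun p hp => ?_
  rw [Measure.smul_apply, Measure.dirac_apply' _ hA, smul_eq_mul]
  by_cases h : p ∈ A <;> simp [h]

lemma fs_le {s : Finset X} {wf : X → ℝ} {xv : X} (hxs : xv ∈ s) {A : Set X}
    (hA : MeasurableSet A) (hAs : A ∩ ↑s ⊆ {xv}) :
    (∑ p ∈ s, ENNReal.ofReal (wf p) • Measure.dirac p) A ≤ ENNReal.ofReal (wf xv) := by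
  rw [fs_apply s wf A hA]
  rw [Finset.sum_eq_single_of_mem xv hxs (fun p hp hne => by
    apply Set.indicator_of_notMem
    intro hpA
    exact hne (hAs ⟨hpA, hp⟩))]
  exact Set.indicator_apply_le (fun _ => le_rfl)

lemma fs_zero {s : Finset X} {wf : X → ℝ} {A : Set X}
    (hA : MeasurableSet A) (hAs : A ∩ ↑s = ∅) :
    (∑ p ∈ s, ENNReal.ofReal (wf p) • Measure.dirac p) A = 0 := by
  rw [fs_apply s wf A hA]
  refine Finset.sum_eq_zero fun p hp => ?_
  apply Set.indicator_of_notMem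
  intro hpA
  exact absurd (show p ∈ A ∩ ↑s from ⟨hpA, hp⟩) (by rw [hAs]; exact notMem_empty p)

lemma fs_singleton {s : Finset X} {wf : X → ℝ} {xv : X} (hxs : xv ∈ s) :
    (∑ p ∈ s, ENNReal.ofReal (wf p) • Measure.dirac p) {xv} = ENNReal.ofReal (wf xv) := by
  rw [fs_apply s wf {xv} (measurableSet_singleton xv)]
  rw [Finset.sum_eq_single_of_mem xv hxs (fun p hp hne => by
    apply Set.indicator_of_notMem
    simpa using hne)]
  simp

/-- Localization near an exposed vertex of the convex hull of a finite set. -/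
lemma localization {s : Finset X} {g : X →L[ℝ] ℝ} {xv : X} (hxs : xv ∈ s) {β M : ℝ}
    (hβ : 0 < β) (hgs : ∀ p ∈ s, p ≠ xv → g p ≤ g xv - β) (hM : ∀ p ∈ s, ‖p - xv‖ ≤ M)
    {y : X} (hy : y ∈ convexHull ℝ (↑s : Set X)) {c : ℝ} (hc : 0 ≤ c)
    (hgy : g xv - c ≤ g y) : ‖y - xv‖ ≤ c / β * M := by
  classical
  rw [Finset.convexHull_eq] at hy
  obtain ⟨θ, hθ0, hθ1, hy⟩ := hy
  rw [Finset.centerMass_eq_of_sum_1 _ _ hθ1] at hy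
  simp only [id] at hy
  have hgy' : g y = ∑ p ∈ s, θ p * g p := by
    rw [← hy, map_sum]
    exact Finset.sum_congr rfl fun p hp => by rw [ContinuousLinearMap.map_smul, smul_eq_mul]
  have hM0 : 0 ≤ M := le_trans (by simp) (hM xv hxs)
  have key : ∑ p ∈ s, θ p * g p ≤ g xv - ∑ p ∈ s.erase xv, θ p * β := by
    have h1 : ∀ p ∈ s, θ p * g p ≤ θ p * g xv - (if p = xv then 0 else θ p * β) := by
      intro p hp
      by_cases hpv : p = xv
      · simp [hpv]
      · simp only [hpv, if_false]
        have := hgs p hp hpv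
        have hθp := hθ0 p hp
        nlinarith
    calc ∑ p ∈ s, θ p * g p
        ≤ ∑ p ∈ s, (θ p * g xv - (if p = xv then 0 else θ p * β)) :=
          Finset.sum_le_sum h1
      _ = (∑ p ∈ s, θ p) * g xv - ∑ p ∈ s, (if p = xv then 0 else θ p * β) := by
          rw [Finset.sum_sub_distrib, Finset.sum_mul]
      _ = g xv - ∑ p ∈ s.erase xv, θ p * β := by
          rw [hθ1, one_mul]
          congr 1
          rw [Finset.sum_eq_sum_sdiff_singleton_add hxs, Finset.sdiff_singleton_eq_erase]
          have h0 : (if xv = xv then (0:ℝ) else θ xv * β) = 0 := by simp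
          rw [h0, add_zero]
          exact Finset.sum_congr rfl fun p hp => by
            simp [(Finset.mem_erase.1 hp).1]
  have hT : (∑ p ∈ s.erase xv, θ p) * β ≤ c := by
    rw [← Finset.sum_mul] at key
    linarith [hgy, hgy']
  have hT' : ∑ p ∈ s.erase xv, θ p ≤ c / β := (le_div_iff₀ hβ).2 hT
  have hy2 : y - xv = ∑ p ∈ s, θ p • (p - xv) := by
    have : ∑ p ∈ s, θ p • (p - xv) = (∑ p ∈ s, θ p • p) - (∑ p ∈ s, θ p) • xv := by
      rw [Finset.sum_smul]
      rw [← Finset.sum_sub_distrib]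
      exact Finset.sum_congr rfl fun p hp => smul_sub _ _ _
    rw [this, hθ1, one_smul, hy]
  calc ‖y - xv‖ = ‖∑ p ∈ s, θ p • (p - xv)‖ := by rw [hy2]
    _ ≤ ∑ p ∈ s, ‖θ p • (p - xv)‖ := norm_sum_le _ _
    _ = ∑ p ∈ s, θ p * ‖p - xv‖ := Finset.sum_congr rfl fun p hp => by
        rw [norm_smul, Real.norm_eq_abs, abs_of_nonneg (hθ0 p hp)]
    _ = ∑ p ∈ s.erase xv, θ p * ‖p - xv‖ := by
        rw [Finset.sum_eq_sum_sdiff_singleton_add hxs, Finset.sdiff_singleton_eq_erase]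
        simp
    _ ≤ ∑ p ∈ s.erase xv, θ p * M := Finset.sum_le_sum fun p hp =>
        mul_le_mul_of_nonneg_left (hM p (Finset.mem_of_mem_erase hp))
          (hθ0 p (Finset.mem_of_mem_erase hp))
    _ = (∑ p ∈ s.erase xv, θ p) * M := by rw [Finset.sum_mul]
    _ ≤ c / β * M := mul_le_mul_of_nonneg_right hT' hM0

lemma mSupport_fs (μ : ProbabilityMeasure X) (s : Finset X) (wf : X → ℝ)
    (hpos : ∀ p ∈ s, 0 < wf p)
    (hrep : (μ : Measure X) = ∑ p ∈ s, ENNReal.ofReal (wf p) • Measure.dirac p) :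
    mSupport μ = ↑s := by
  ext x
  constructor
  · intro hx
    by_contra hxs
    have hcl : IsClosed (↑s : Set X) := s.finite_toSet.isClosed
    obtain ⟨r, hr0, hrs⟩ := Metric.isOpen_iff.1 hcl.isOpen_compl x hxs
    have h0 : (μ : Measure X) (ball x r) = 0 := by
      rw [hrep]
      refine fs_zero measurableSet_ball ?_
      rw [Set.eq_empty_iff_forall_notMem]
      rintro y ⟨hy1, hy2⟩
      exact hrs hy1 hy2
    exact absurd (hx r hr0) (by rw [h0]; exact lt_irrefl 0)
  · intro hx r hr
    have h1 : (μ : Measure X) {x} = ENNReal.ofReal (wf x) := by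
      rw [hrep]; exact fs_singleton hx
    calc (0:ℝ≥0∞) < ENNReal.ofReal (wf x) := ENNReal.ofReal_pos.2 (hpos x hx)
      _ = (μ : Measure X) {x} := h1.symm
      _ ≤ (μ : Measure X) (ball x r) :=
          measure_mono (Set.singleton_subset_iff.2 (mem_ball_self hr))

lemma exists_direction (g : X →L[ℝ] ℝ) (hg : ‖g‖ = 1) {γ : ℝ} (hγ : 0 < γ) :
    ∃ z : X, ‖z‖ ≤ 1 ∧ 1 - γ < g z := by
  obtain ⟨z0, hz0, hz0g⟩ := g.exists_lt_apply_of_lt_opNorm (r := 1 - γ) (by rw [hg]; linarith)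
  rcases le_or_gt 0 (g z0) with h|h
  · exact ⟨z0, hz0.le, by rwa [Real.norm_eq_abs, abs_of_nonneg h] at hz0g⟩
  · refine ⟨-z0, by simpa using hz0.le, ?_⟩
    rw [map_neg]
    rw [Real.norm_eq_abs, abs_of_neg h] at hz0g
    linarith

lemma apply_sub_le_dist (g : X →L[ℝ] ℝ) (hg : ‖g‖ = 1) (x q : X) : g x - g q ≤ dist x q := by
  have h1 : ‖g (x - q)‖ ≤ ‖g‖ * ‖x - q‖ := g.le_opNorm _
  rw [hg, one_mul, map_sub] at h1
  rw [dist_eq_norm]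
  calc g x - g q ≤ |g x - g q| := le_abs_self _
    _ = ‖g x - g q‖ := rfl
    _ ≤ ‖x - q‖ := h1

end GeomAux
set_option maxHeartbeats 1000000

/-- The last statement of Proposition 3.2: for a surjective Lévy–Prokhorov isometry fixing
all Dirac measures, the image of a finitely supported non-Dirac measure is supported in the
convex hull `K` of the original support, and every vertex of `K` is an isolated atom of the
image, with the same weight. -/
theorem vertex_isolated_atom {X : Type*} [NormedAddCommGroup X] [NormedSpace ℝ X]
    [CompleteSpace X] [SeparableSpace X] [MeasurableSpace X] [BorelSpace X]
    (φ : ProbabilityMeasure X → ProbabilityMeasure X)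
    (hsurj : Function.Surjective φ)
    (hiso : ∀ μ ν : ProbabilityMeasure X, LPdist (φ μ) (φ ν) = LPdist μ ν)
    (hfix : ∀ x : X, φ (diracPM x) = diracPM x)
    (μ : ProbabilityMeasure X) (hμ : IsFinitelySupported μ)
    (hμnd : μ ∉ Set.range fun x : X => diracPM x)
    (xv : X) (hxv : xv ∈ Set.extremePoints ℝ (convexHull ℝ (mSupport μ))) :
    mSupport (φ μ) ⊆ convexHull ℝ (mSupport μ) ∧
    0 < (φ μ : Measure X) {xv} ∧
    (∃ r : ℝ, 0 < r ∧ (φ μ : Measure X) (closure (ball xv r)) = (φ μ : Measure X) {xv}) ∧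
    (φ μ : Measure X) {xv} = (μ : Measure X) {xv} := by
  classical
  haveI : SecondCountableTopology X := UniformSpace.secondCountable_of_separable X
  obtain ⟨s, w, hwpos, hwsum, hrep⟩ := hμ
  set ν : ProbabilityMeasure X := φ μ with hν
  have hwit : ∀ x : X, witness ν x = witness μ x := by
    intro x
    show LPdist (diracPM x) (φ μ) = LPdist (diracPM x) μ
    calc LPdist (diracPM x) (φ μ) = LPdist (φ (diracPM x)) (φ μ) := by rw [hfix]
      _ = LPdist (diracPM x) μ := hiso _ _
  have hsupp : mSupport μ = ↑s := mSupport_fs μ s w hwpos hrep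
  rw [hsupp] at hxv
  set K : Set X := convexHull ℝ (↑s : Set X) with hK
  have hxs : xv ∈ s := extremePoints_convexHull_subset hxv
  have hμxv : (μ : Measure X) {xv} = ENNReal.ofReal (w xv) := by
    rw [hrep]; exact fs_singleton hxs
  have hm0 : 0 < w xv := hwpos xv hxs
  -- there is another support point
  have hy : ∃ y ∈ s, y ≠ xv := by
    by_contra h
    push_neg at h
    apply hμnd
    refine ⟨xv, ?_⟩
    have hs1 : s = {xv} := Finset.eq_singleton_iff_unique_mem.2 ⟨hxs, fun y hy => h y hy⟩
    have hw1 : w xv = 1 := by rw [hs1] at hwsum; simpa using hwsum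
    symm
    apply Subtype.ext
    show (μ : Measure X) = Measure.dirac xv
    rw [hrep, hs1]
    simp [hw1]
  obtain ⟨y₀, hy₀s, hy₀⟩ := hy
  have hm1 : w xv < 1 := by
    have h1 : w xv + ∑ p ∈ s.erase xv, w p = ∑ p ∈ s, w p := Finset.add_sum_erase s w hxs
    have h2 : w y₀ ≤ ∑ p ∈ s.erase xv, w p :=
      Finset.single_le_sum (fun p hp => (hwpos p (Finset.mem_of_mem_erase hp)).le)
        (Finset.mem_erase.2 ⟨hy₀, hy₀s⟩)
    have h3 : 0 < w y₀ := hwpos y₀ hy₀s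
    linarith [hwsum]
  set a : ℝ := 1 - w xv with ha_def
  have ha : 0 < a := by simp only [ha_def]; linarith
  have ha1 : a < 1 := by simp only [ha_def]; linarith
  have hwa : w xv + a = 1 := by simp only [ha_def]; ring
  -- Part 1 : no mass outside K
  have houtside : ∀ p, p ∉ K → ∃ r : ℝ, 0 < r ∧ (ν : Measure X) (ball p r) = 0 := by
    intro p hp
    obtain ⟨f, u, hfu, huf⟩ := geometric_hahn_banach_closed_point
      (convex_convexHull ℝ (↑s : Set X)) (s.finite_toSet.isCompact_convexHull ℝ).isClosed hp
    have hf0 : f ≠ 0 := by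
      intro h
      have h1 := hfu xv (subset_convexHull ℝ _ hxs)
      rw [h] at h1 huf
      simp only [ContinuousLinearMap.zero_apply] at h1 huf
      linarith
    have hfn : 0 < ‖f‖ := norm_pos_iff.2 hf0
    set g : X →L[ℝ] ℝ := ‖f‖⁻¹ • f with hg_def
    have hgnorm : ‖g‖ = 1 := by
      rw [hg_def, norm_smul (‖f‖⁻¹) f, norm_inv, norm_norm, inv_mul_cancel₀ (ne_of_gt hfn)]
    set δ : ℝ := ‖f‖⁻¹ * (f p - u) with hδ_def
    have hδ : 0 < δ := mul_pos (inv_pos.2 hfn) (by linarith [huf])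
    have hgK : ∀ q ∈ (↑s : Set X), g q ≤ g p - δ := by
      intro q hq
      have hfq : f q < u := hfu q (subset_convexHull ℝ _ hq)
      show ‖f‖⁻¹ * f q ≤ ‖f‖⁻¹ * f p - ‖f‖⁻¹ * (f p - u)
      have h2 : ‖f‖⁻¹ * f p - ‖f‖⁻¹ * (f p - u) = ‖f‖⁻¹ * u := by ring
      rw [h2]
      exact mul_le_mul_of_nonneg_left hfq.le (inv_nonneg.2 hfn.le)
    set r : ℝ := min δ 1 / 8 with hr_def
    have hmin1 : min δ 1 ≤ 1 := min_le_right _ _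
    have hminδ : min δ 1 ≤ δ := min_le_left _ _
    have hmin0 : 0 < min δ 1 := lt_min hδ one_pos
    have hr0 : 0 < r := by rw [hr_def]; positivity
    refine ⟨r, hr0, ?_⟩
    by_contra hne
    have hfin : (ν : Measure X) (ball p r) ≠ ⊤ := measure_ne_top _ _
    set η : ℝ := ((ν : Measure X) (ball p r)).toReal with hη_def
    have hη0 : 0 < η := ENNReal.toReal_pos hne hfin
    have hη1 : η ≤ 1 := by
      calc η ≤ (1:ℝ≥0∞).toReal := ENNReal.toReal_mono (by norm_num) prob_le_one
        _ = 1 := by simp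
    have hofη : ENNReal.ofReal η = (ν : Measure X) (ball p r) := ENNReal.ofReal_toReal hfin
    set γ : ℝ := min δ 1 / 8 with hγ_def
    have hγ0 : 0 < γ := hr0
    obtain ⟨z, hz1, hzg⟩ := exists_direction g hgnorm hγ0
    set t : ℝ := max (1 - 2*r - η/2) 0 with ht_def
    have ht0 : 0 ≤ t := le_max_right _ _
    have ht1 : t ≤ 1 := max_le (by linarith) zero_le_one
    set x : X := p + t • z with hx_def
    have hdxp : dist x p ≤ t := by
      rw [hx_def, dist_eq_norm, add_sub_cancel_left, norm_smul, Real.norm_eq_abs,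
        abs_of_nonneg ht0]
      calc t * ‖z‖ ≤ t * 1 := mul_le_mul_of_nonneg_left hz1 ht0
        _ = t := mul_one t
    set ε₀ : ℝ := t + 2*r with hε₀_def
    have hε₀0 : 0 < ε₀ := by rw [hε₀_def]; linarith
    have hrle : r ≤ 1/8 := by rw [hr_def]; linarith
    have h1 : ε₀ < 1 := by
      have h2 : t < 1 - 2*r := max_lt (by linarith) (by linarith)
      rw [hε₀_def]; linarith
    have hδle : 2*r + γ < δ := by
      rw [hr_def, hγ_def]; linarith
    have htrig : 1 - ε₀ ≤ η := by
      rcases le_total (1 - 2*r - η/2) 0 with h|h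
      · have he : t = 0 := max_eq_right h
        rw [hε₀_def, he]; linarith
      · have he : t = 1 - 2*r - η/2 := max_eq_left h
        rw [hε₀_def, he]; linarith
    have hwle : witness ν x ≤ ε₀ := by
      apply witness_le ν x hε₀0
      have hsub2 : ball p r ⊆ ball x ε₀ := by
        intro q hq
        rw [mem_ball] at hq ⊢
        calc dist q x ≤ dist q p + dist p x := dist_triangle _ _ _
          _ < r + t := by rw [dist_comm p x]; linarith [hdxp]
          _ ≤ ε₀ := by rw [hε₀_def]; linarith
      calc (1:ℝ≥0∞) = ENNReal.ofReal 1 := by simp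
        _ ≤ ENNReal.ofReal (η + ε₀) := ENNReal.ofReal_le_ofReal (by linarith)
        _ = ENNReal.ofReal η + ENNReal.ofReal ε₀ := ENNReal.ofReal_add hη0.le hε₀0.le
        _ ≤ (ν : Measure X) (ball x ε₀) + ENNReal.ofReal ε₀ := by
            gcongr
            rw [hofη]
            exact measure_mono hsub2
    have hgx : g p + t * (1-γ) ≤ g x := by
      rw [hx_def, map_add, ContinuousLinearMap.map_smul, smul_eq_mul]
      have : t * (1 - γ) ≤ t * g z := mul_le_mul_of_nonneg_left hzg.le ht0
      linarith
    have hE : min 1 (δ + t*(1-γ)) ≤ witness μ x := by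
      apply le_witness
      intro ε hε0 hεE
      rw [lt_min_iff] at hεE
      have hb : (μ : Measure X) (ball x ε) = 0 := by
        rw [hrep]
        apply fs_zero measurableSet_ball
        rw [Set.eq_empty_iff_forall_notMem]
        rintro q ⟨hq1, hq2⟩
        rw [mem_ball, dist_comm] at hq1
        have h3 : g x - g q ≤ dist x q := apply_sub_le_dist g hgnorm x q
        have h4 : g q ≤ g p - δ := hgK q hq2
        linarith [hεE.2, hgx]
      rw [hb, zero_add]
      intro habs
      have h5 : (1:ℝ) ≤ ε := ENNReal.one_le_ofReal.1 habs
      linarith [hεE.1]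
    have hfinal : ε₀ < min 1 (δ + t*(1-γ)) := by
      apply lt_min h1
      have h6 : t * γ ≤ γ := by
        calc t * γ ≤ 1 * γ := mul_le_mul_of_nonneg_right ht1 hγ0.le
          _ = γ := one_mul γ
      have h8 : t * (1-γ) = t - t*γ := by ring
      rw [hε₀_def]
      linarith
    have h7 := hwit x
    linarith [hwle, hE]
  have hsub : mSupport ν ⊆ K := by
    intro q hq
    by_contra hqK
    obtain ⟨r, hr0, hr⟩ := houtside q hqK
    exact absurd (hq r hr0) (by rw [hr]; exact lt_irrefl 0)
  have hνKc : (ν : Measure X) Kᶜ = 0 := by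
    apply measure_null_of_locally_null
    intro p hp
    obtain ⟨r, hr0, hr⟩ := houtside p hp
    exact ⟨ball p r, nhdsWithin_le_nhds (ball_mem_nhds p hr0), hr⟩
  -- a separating functional for the vertex
  obtain ⟨g, β, hgnorm, hβ, hgs⟩ :
      ∃ (g : X →L[ℝ] ℝ) (β : ℝ), ‖g‖ = 1 ∧ 0 < β ∧ ∀ p ∈ s, p ≠ xv → g p ≤ g xv - β := by
    have hxvC : xv ∉ convexHull ℝ (↑(s.erase xv) : Set X) := by
      have hxv' := (convex_convexHull ℝ (↑s : Set X)).mem_extremePoints_iff_mem_diff_convexHull_diff.1 hxv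
      intro hc
      apply hxv'.2
      refine convexHull_mono ?_ hc
      intro p hp
      rw [Finset.coe_erase] at hp
      exact ⟨subset_convexHull ℝ _ hp.1, hp.2⟩
    have hCclosed : IsClosed (convexHull ℝ (↑(s.erase xv) : Set X)) :=
      ((s.erase xv).finite_toSet.isCompact_convexHull ℝ).isClosed
    obtain ⟨f, u, hfu, huf⟩ := geometric_hahn_banach_closed_point
      (convex_convexHull ℝ _) hCclosed hxvC
    have hy₀C : y₀ ∈ convexHull ℝ (↑(s.erase xv) : Set X) :=
      subset_convexHull ℝ _ (by simp [Finset.mem_erase, hy₀, hy₀s])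
    have hf0 : f ≠ 0 := by
      intro h
      have h1 := hfu y₀ hy₀C
      rw [h] at h1 huf
      simp only [ContinuousLinearMap.zero_apply] at h1 huf
      linarith
    have hfn : 0 < ‖f‖ := norm_pos_iff.2 hf0
    refine ⟨‖f‖⁻¹ • f, ‖f‖⁻¹ * (f xv - u), ?_, ?_, ?_⟩
    · rw [norm_smul (‖f‖⁻¹) f, norm_inv, norm_norm, inv_mul_cancel₀ (ne_of_gt hfn)]
    · exact mul_pos (inv_pos.2 hfn) (by linarith [huf])
    · intro p hp hpv
      have hfp : f p < u := hfu p (subset_convexHull ℝ _ (by simp [Finset.mem_erase, hpv, hp]))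
      show ‖f‖⁻¹ * f p ≤ ‖f‖⁻¹ * f xv - ‖f‖⁻¹ * (f xv - u)
      have h2 : ‖f‖⁻¹ * f xv - ‖f‖⁻¹ * (f xv - u) = ‖f‖⁻¹ * u := by ring
      rw [h2]
      exact mul_le_mul_of_nonneg_left hfp.le (inv_nonneg.2 hfn.le)
  set M : ℝ := s.sup' ⟨xv, hxs⟩ (fun p => ‖p - xv‖) with hM_def
  have hM : ∀ p ∈ s, ‖p - xv‖ ≤ M := fun p hp => by
    simpa [hM_def] using Finset.le_sup' (fun q => ‖q - xv‖) hp
  have hM0 : 0 ≤ M := le_trans (by simp) (hM xv hxs)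
  -- Part a : lower bound for the mass of small balls around the vertex
  have hlower : ∀ ρ : ℝ, 0 < ρ → ENNReal.ofReal (w xv) ≤ (ν : Measure X) (ball xv ρ) := by
    intro ρ hρ
    have hcore : ∀ γ' : ℝ, 0 < γ' →
        ENNReal.ofReal (w xv) ≤ (ν : Measure X) (ball xv ρ) + ENNReal.ofReal γ' := by
      intro γ' hγ'
      have hM1 : (0:ℝ) < M + 1 := by linarith
      set B : ℝ := ρ * β / (8 * (M+1)) with hB_def
      have h8 : (0:ℝ) < B := by rw [hB_def]; positivity
      set e : ℝ := min γ' (min 1 B) / 2 with he_def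
      have hemin : min γ' (min 1 B) ≤ min 1 B := min_le_right _ _
      have hemin2 : min 1 B ≤ 1 := min_le_left _ _
      have hemin3 : min 1 B ≤ B := min_le_right _ _
      have heγ : min γ' (min 1 B) ≤ γ' := min_le_left _ _
      have hminpos : 0 < min γ' (min 1 B) := lt_min hγ' (lt_min one_pos h8)
      have he0 : 0 < e := by rw [he_def]; linarith
      have he1 : e < 1 := by rw [he_def]; linarith
      have heγ' : e ≤ γ' := by rw [he_def]; linarith
      have heB : e ≤ B := by rw [he_def]; linarith
      obtain ⟨z, hz1, hzg⟩ := exists_direction g hgnorm he0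
      set t : ℝ := a * (1 - e) with ht_def
      have ht0 : 0 ≤ t := mul_nonneg ha.le (by linarith)
      have hta : t < a := by rw [ht_def]; nlinarith
      set x : X := xv + t • z with hx_def
      have hdxxv : dist x xv ≤ t := by
        rw [hx_def, dist_eq_norm, add_sub_cancel_left, norm_smul, Real.norm_eq_abs,
          abs_of_nonneg ht0]
        calc t * ‖z‖ ≤ t * 1 := mul_le_mul_of_nonneg_left hz1 ht0
          _ = t := mul_one t
      have hw1 : witness μ x ≤ a := by
        apply witness_le μ x ha
        have hxv_mem : xv ∈ ball x a := by
          rw [mem_ball, dist_comm]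
          exact lt_of_le_of_lt hdxxv hta
        calc (1:ℝ≥0∞) = ENNReal.ofReal (w xv + a) := by rw [hwa]; simp
          _ = ENNReal.ofReal (w xv) + ENNReal.ofReal a := ENNReal.ofReal_add hm0.le ha.le
          _ ≤ (μ : Measure X) (ball x a) + ENNReal.ofReal a := by
              gcongr
              rw [← hμxv]
              exact measure_mono (singleton_subset_iff.2 hxv_mem)
      have hw2 : witness ν x < a + e := by
        rw [hwit x]; linarith
      have hP1 := witness_ball ν x hw2
      have hgx : g xv + t * (1-e) ≤ g x := by
        rw [hx_def, map_add, ContinuousLinearMap.map_smul, smul_eq_mul]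
        have : t * (1 - e) ≤ t * g z := mul_le_mul_of_nonneg_left hzg.le ht0
        linarith
      have hgx2 : g xv + a*(1-e)*(1-e) ≤ g x := by rw [ht_def] at hgx; linarith
      have hballsub : ball x (a+e) ⊆ ball xv ρ ∪ Kᶜ := by
        intro q hq
        by_cases hqK : q ∈ K
        · left
          rw [mem_ball] at hq
          rw [dist_comm] at hq
          have h3 : g x - g q ≤ dist x q := apply_sub_le_dist g hgnorm x q
          have hkey : a*(1-e)*(1-e) ≥ a - 2*e := by
            nlinarith [mul_nonneg ha.le (sq_nonneg e), mul_nonneg he0.le (by linarith : (0:ℝ) ≤ 1 - a)]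
          have h5 : g xv - 3*e ≤ g q := by nlinarith [hq, h3, hgx2, hkey]
          have h6 := localization hxs hβ hgs hM hqK (by linarith : (0:ℝ) ≤ 3*e) h5
          rw [mem_ball, dist_eq_norm]
          have hBdef2 : ρ*β = 8*(B*M) + 8*B := by
            rw [hB_def]
            field_simp
          have hBM : e * M ≤ B * M := mul_le_mul_of_nonneg_right heB hM0
          have hBMpos : 0 ≤ B * M := mul_nonneg h8.le hM0
          have h7 : 3*e/β*M < ρ := by
            rw [div_mul_eq_mul_div, div_lt_iff₀ hβ]
            nlinarith [hBM, h8, hBMpos, hBdef2]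
          linarith [h6, h7]
        · right; exact hqK
      have hνball : (ν : Measure X) (ball x (a+e)) ≤ (ν : Measure X) (ball xv ρ) := by
        calc (ν : Measure X) (ball x (a+e)) ≤ (ν : Measure X) (ball xv ρ ∪ Kᶜ) :=
              measure_mono hballsub
          _ ≤ (ν : Measure X) (ball xv ρ) + (ν : Measure X) Kᶜ := measure_union_le _ _
          _ = (ν : Measure X) (ball xv ρ) := by rw [hνKc, add_zero]
      have h6 : (1:ℝ≥0∞) ≤ (ν : Measure X) (ball xv ρ) + ENNReal.ofReal (a+e) := by
        calc (1:ℝ≥0∞) ≤ (ν : Measure X) (ball x (a+e)) + ENNReal.ofReal (a+e) := hP1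
          _ ≤ _ := by gcongr
      have h7 : ENNReal.ofReal (w xv) + ENNReal.ofReal a ≤
          ((ν : Measure X) (ball xv ρ) + ENNReal.ofReal e) + ENNReal.ofReal a := by
        calc ENNReal.ofReal (w xv) + ENNReal.ofReal a = ENNReal.ofReal (w xv + a) :=
              (ENNReal.ofReal_add hm0.le ha.le).symm
          _ = 1 := by rw [hwa]; simp
          _ ≤ (ν : Measure X) (ball xv ρ) + ENNReal.ofReal (a+e) := h6
          _ = ((ν : Measure X) (ball xv ρ) + ENNReal.ofReal e) + ENNReal.ofReal a := by
              rw [ENNReal.ofReal_add ha.le he0.le]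
              rw [add_assoc, add_comm (ENNReal.ofReal a) (ENNReal.ofReal e), ← add_assoc]
      have h9 := (ENNReal.add_le_add_iff_right (ENNReal.ofReal_ne_top)).1 h7
      calc ENNReal.ofReal (w xv) ≤ (ν : Measure X) (ball xv ρ) + ENNReal.ofReal e := h9
        _ ≤ (ν : Measure X) (ball xv ρ) + ENNReal.ofReal γ' := by
            gcongr
    apply ENNReal.le_of_forall_pos_le_add
    intro ϵ hϵ hlt
    calc ENNReal.ofReal (w xv) ≤ (ν : Measure X) (ball xv ρ) + ENNReal.ofReal (ϵ:ℝ) :=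
          hcore _ (by exact_mod_cast hϵ)
      _ = (ν : Measure X) (ball xv ρ) + ϵ := by rw [ENNReal.ofReal_coe_nnreal]
  -- Part b : upper bound for the mass of the closure of some small ball
  have hupper : ∃ ρ : ℝ, 0 < ρ ∧
      (ν : Measure X) (closure (ball xv ρ)) ≤ ENNReal.ofReal (w xv) := by
    by_contra hcon
    push_neg at hcon
    set ρ : ℝ := min a β / 16 with hρ_def
    have hminab : 0 < min a β := lt_min ha hβ
    have hρa : ρ ≤ a/16 := by rw [hρ_def]; have := min_le_left a β; linarith
    have hρβ : ρ ≤ β/16 := by rw [hρ_def]; have := min_le_right a β; linarith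
    have hρ0 : 0 < ρ := by rw [hρ_def]; linarith
    have hcl := hcon ρ hρ0
    have hfin : (ν : Measure X) (closure (ball xv ρ)) ≠ ⊤ := measure_ne_top _ _
    set η : ℝ := ((ν : Measure X) (closure (ball xv ρ))).toReal - w xv with hη_def
    have hη0 : 0 < η := by
      have h1 : w xv < ((ν : Measure X) (closure (ball xv ρ))).toReal :=
        (ENNReal.ofReal_lt_iff_lt_toReal hm0.le hfin).1 hcl
      rw [hη_def]; linarith
    have hclval : (ν : Measure X) (closure (ball xv ρ)) = ENNReal.ofReal (w xv + η) := by
      have hr : w xv + η = ((ν : Measure X) (closure (ball xv ρ))).toReal := by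
        rw [hη_def]; ring
      rw [hr, ENNReal.ofReal_toReal hfin]
    set γ : ℝ := min β 1 / 8 with hγ_def
    have hγβ : γ ≤ β/8 := by rw [hγ_def]; have := min_le_left β 1; linarith
    have hγ0 : 0 < γ := by rw [hγ_def]; have := lt_min hβ one_pos; linarith
    set γ' : ℝ := min η (min a β) / 8 with hγ'_def
    have hγ'0 : 0 < γ' := by rw [hγ'_def]; have := lt_min hη0 (lt_min ha hβ); linarith
    have hγ'a : γ' ≤ a/8 := by
      rw [hγ'_def]
      have h := le_trans (min_le_right η (min a β)) (min_le_left a β)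
      linarith
    have hγ'β : γ' ≤ β/8 := by
      rw [hγ'_def]
      have h := le_trans (min_le_right η (min a β)) (min_le_right a β)
      linarith
    obtain ⟨z, hz1, hzg⟩ := exists_direction g hgnorm hγ0
    set t : ℝ := max (a - ρ - γ' - η) 0 with ht_def
    have ht0 : 0 ≤ t := le_max_right _ _
    have hta : t ≤ a := max_le (by linarith) ha.le
    have ht1 : t ≤ 1 := by linarith
    set x : X := xv + t • z with hx_def
    have hdxxv : dist x xv ≤ t := by
      rw [hx_def, dist_eq_norm, add_sub_cancel_left, norm_smul, Real.norm_eq_abs,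
        abs_of_nonneg ht0]
      calc t * ‖z‖ ≤ t * 1 := mul_le_mul_of_nonneg_left hz1 ht0
        _ = t := mul_one t
    set ε₀ : ℝ := t + ρ + γ' with hε₀_def
    have hε₀0 : 0 < ε₀ := by rw [hε₀_def]; linarith
    have hi : ε₀ < a := by
      rcases le_total (a - ρ - γ' - η) 0 with h|h
      · have he : t = 0 := max_eq_right h
        rw [hε₀_def, he]; linarith
      · have he : t = a - ρ - γ' - η := max_eq_left h
        rw [hε₀_def, he]; linarith
    have hii : ε₀ < β + t*(1-γ) := by
      have h6 : t * γ ≤ γ := by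
        calc t * γ ≤ 1 * γ := mul_le_mul_of_nonneg_right ht1 hγ0.le
          _ = γ := one_mul γ
      have h8 : t * (1-γ) = t - t*γ := by ring
      rw [hε₀_def]; linarith
    have htrig : a - η ≤ ε₀ := by
      rcases le_total (a - ρ - γ' - η) 0 with h|h
      · have he : t = 0 := max_eq_right h
        rw [hε₀_def, he]; linarith
      · have he : t = a - ρ - γ' - η := max_eq_left h
        rw [hε₀_def, he]; linarith
    have hwle : witness ν x ≤ ε₀ := by
      apply witness_le ν x hε₀0
      have hsub2 : closure (ball xv ρ) ⊆ ball x ε₀ := by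
        intro q hq
        have hq2 : dist q xv ≤ ρ := by
          have := closure_ball_subset_closedBall hq
          rwa [mem_closedBall] at this
        rw [mem_ball]
        calc dist q x ≤ dist q xv + dist xv x := dist_triangle _ _ _
          _ ≤ ρ + t := by rw [dist_comm xv x]; linarith [hdxxv]
          _ < ε₀ := by rw [hε₀_def]; linarith
      calc (1:ℝ≥0∞) = ENNReal.ofReal 1 := by simp
        _ ≤ ENNReal.ofReal (w xv + η + ε₀) := ENNReal.ofReal_le_ofReal (by linarith [hwa, htrig])
        _ = ENNReal.ofReal (w xv + η) + ENNReal.ofReal ε₀ :=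
            ENNReal.ofReal_add (by linarith) hε₀0.le
        _ ≤ (ν : Measure X) (ball x ε₀) + ENNReal.ofReal ε₀ := by
            gcongr
            rw [← hclval]
            exact measure_mono hsub2
    have hgx : g xv + t * (1-γ) ≤ g x := by
      rw [hx_def, map_add, ContinuousLinearMap.map_smul, smul_eq_mul]
      have : t * (1 - γ) ≤ t * g z := mul_le_mul_of_nonneg_left hzg.le ht0
      linarith
    have hE : min a (β + t*(1-γ)) ≤ witness μ x := by
      apply le_witness
      intro ε hε0 hεE
      rw [lt_min_iff] at hεE
      have hb : (μ : Measure X) (ball x ε) ≤ ENNReal.ofReal (w xv) := by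
        rw [hrep]
        apply fs_le hxs measurableSet_ball
        rintro q ⟨hq1, hq2⟩
        rw [mem_singleton_iff]
        by_contra hqv
        rw [mem_ball, dist_comm] at hq1
        have h3 : g x - g q ≤ dist x q := apply_sub_le_dist g hgnorm x q
        have h4 : g q ≤ g xv - β := hgs q (Finset.mem_coe.1 hq2) hqv
        linarith [hεE.2, hgx]
      intro habs
      have h5 : (1:ℝ≥0∞) ≤ ENNReal.ofReal (w xv) + ENNReal.ofReal ε :=
        le_trans habs (by gcongr)
      rw [← ENNReal.ofReal_add hm0.le hε0.le] at h5
      have h6 : (1:ℝ) ≤ w xv + ε := ENNReal.one_le_ofReal.1 h5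
      linarith [hεE.1]
    have hfinal : ε₀ < min a (β + t*(1-γ)) := lt_min hi hii
    have h7 := hwit x
    linarith [hwle, hE]
  obtain ⟨ρ₀, hρ₀, hub⟩ := hupper
  -- the measure of the singleton
  have hsing : (ν : Measure X) {xv} = ENNReal.ofReal (w xv) := by
    have hiI : ⋂ n : ℕ, ball xv (ρ₀ / (n+1)) = {xv} := by
      ext z
      simp only [mem_iInter, mem_ball, mem_singleton_iff]
      constructor
      · intro h
        by_contra hz
        have hd : 0 < dist z xv := dist_pos.2 hz
        obtain ⟨n, hn⟩ := exists_nat_one_div_lt (div_pos hd hρ₀)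
        have h2 := h n
        have hn' := (div_lt_div_iff₀ (by positivity) hρ₀).1 hn
        have h3 : ρ₀ / (n+1) < dist z xv := by
          rw [div_lt_iff₀ (by positivity)]
          nlinarith
        linarith
      · intro h
        subst h
        intro n
        rw [dist_self]
        positivity
    have hanti : Antitone (fun n : ℕ => ball xv (ρ₀ / (n+1))) := by
      intro n m hnm
      apply ball_subset_ball
      have hc : ((n:ℝ)+1) ≤ (m:ℝ)+1 := by
        have : (n:ℝ) ≤ m := Nat.cast_le.2 hnm
        linarith
      exact div_le_div_of_nonneg_left hρ₀.le (by positivity) hc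
    have hmeas := Antitone.measure_iInter (μ := (ν : Measure X)) hanti
      (fun n => measurableSet_ball.nullMeasurableSet) ⟨0, measure_ne_top _ _⟩
    rw [hiI] at hmeas
    rw [hmeas]
    apply le_antisymm
    · apply iInf_le_of_le 0
      refine le_trans (measure_mono ?_) hub
      intro q hq
      apply subset_closure
      simpa using hq
    · exact le_iInf fun n => hlower _ (by positivity)
  refine ⟨by rw [hsupp]; exact hsub, ?_, ⟨ρ₀, hρ₀, ?_⟩, ?_⟩
  · rw [show (φ μ : Measure X) = (ν : Measure X) from rfl, hsing]
    exact ENNReal.ofReal_pos.2 hm0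
  · show (ν : Measure X) (closure (ball xv ρ₀)) = (ν : Measure X) {xv}
    apply le_antisymm
    · calc (ν : Measure X) (closure (ball xv ρ₀)) ≤ ENNReal.ofReal (w xv) := hub
        _ = (ν : Measure X) {xv} := hsing.symm
    · exact measure_mono (singleton_subset_iff.2 (subset_closure (mem_ball_self hρ₀)))
  · show (ν : Measure X) {xv} = (μ : Measure X) {xv}
    rw [hsing, hμxv]
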